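/- The row sums of the FR are bounded: for every state s, ∑_{s'} F^π(s,s') ≤ (1 - γ^{|S|+1})/(1 - γ), i.e., ‖F^π(s)‖_1 ≤ ∑_{k=0}^{|S|} γ^k. -/
import Mathlib


open scoped Classical

/-- Auxiliary: nonnegativity of the FR fixed point. -/
lemma fr_aux_nonneg {S : Type*} [Fintype S] [DecidableEq S]
    (γ : ℝ) (hγ0 : 0 ≤ γ) (hγ1 : γ < 1)
    (P : Matrix S S ℝ) (hP0 : ∀ s s', 0 ≤ P s s') (hP1 : ∀ s, ∑ s', P s s' = 1)
    (Fπ : Matrix S S ℝ)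
    (hfix : ∀ s s', Fπ s s' =
      (if s = s' then (1 : ℝ) else 0) +
        γ * (if s = s' then 0 else 1) * ∑ s'', P s s'' * Fπ s'' s') :
    ∀ t t', 0 ≤ Fπ t t' := by
  intro t t'
  obtain ⟨t₀, -, hmin⟩ := Finset.exists_min_image Finset.univ (fun u => Fπ u t')
    ⟨t, Finset.mem_univ t⟩
  have hmin' : ∀ u, Fπ t₀ t' ≤ Fπ u t' := fun u => hmin u (Finset.mem_univ u)
  have h0 : 0 ≤ Fπ t₀ t' := by
    by_cases he : t₀ = t'
    · rw [hfix, if_pos he, if_pos he]; norm_num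
    · have heq : Fπ t₀ t' = γ * ∑ s'', P t₀ s'' * Fπ s'' t' := by
        rw [hfix, if_neg he, if_neg he]; ring
      have hsum : Fπ t₀ t' ≤ ∑ s'', P t₀ s'' * Fπ s'' t' := by
        calc Fπ t₀ t' = ∑ s'', P t₀ s'' * Fπ t₀ t' := by
              rw [← Finset.sum_mul, hP1, one_mul]
          _ ≤ _ := Finset.sum_le_sum fun i _ =>
              mul_le_mul_of_nonneg_left (hmin' i) (hP0 t₀ i)
      nlinarith [mul_le_mul_of_nonneg_left hsum hγ0]
  exact h0.trans (hmin' t)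

/-- Auxiliary: bound on partial row sums, by induction on the number of unvisited states. -/
lemma fr_aux_bound {S : Type*} [Fintype S] [DecidableEq S]
    (γ : ℝ) (hγ0 : 0 ≤ γ) (hγ1 : γ < 1)
    (P : Matrix S S ℝ) (hP0 : ∀ s s', 0 ≤ P s s') (hP1 : ∀ s, ∑ s', P s s' = 1)
    (Fπ : Matrix S S ℝ)
    (hfix : ∀ s s', Fπ s s' =
      (if s = s' then (1 : ℝ) else 0) +
        γ * (if s = s' then 0 else 1) * ∑ s'', P s s'' * Fπ s'' s') :
    ∀ c : ℕ, ∀ (V : Finset S) (u : S), u ∉ V → ((V ∪ {u})ᶜ).card ≤ c →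
      ∑ s' ∈ (V ∪ {u})ᶜ, Fπ u s' ≤ γ * ∑ k ∈ Finset.range (c + 1), γ ^ k := by
  have hFnn := fr_aux_nonneg γ hγ0 hγ1 P hP0 hP1 Fπ hfix
  have hdiag : ∀ u : S, Fπ u u = 1 := by
    intro u; rw [hfix, if_pos rfl, if_pos rfl]; ring
  -- the key recursion
  have hrec : ∀ (W : Finset S) (u : S), u ∈ W →
      ∑ s' ∈ Wᶜ, Fπ u s' =
        γ * ∑ s'', P u s'' *
          ((if s'' ∈ W then 0 else 1) + ∑ s' ∈ (W ∪ {s''})ᶜ, Fπ s'' s') := by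
    intro W u hu
    have step1 : ∑ s' ∈ Wᶜ, Fπ u s' = γ * ∑ s'' , P u s'' * ∑ s' ∈ Wᶜ, Fπ s'' s' := by
      have : ∀ s' ∈ Wᶜ, Fπ u s' = γ * ∑ s'', P u s'' * Fπ s'' s' := by
        intro s' hs'
        have hne : u ≠ s' := by
          intro h; rw [h] at hu; exact (Finset.mem_compl.mp hs') hu
        rw [hfix, if_neg hne, if_neg hne]; ring
      rw [Finset.sum_congr rfl this, ← Finset.mul_sum, Finset.sum_comm]
      congr 1
      apply Finset.sum_congr rfl
      intro s'' _
      rw [Finset.mul_sum]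
    rw [step1]
    congr 1
    apply Finset.sum_congr rfl
    intro s'' _
    congr 1
    by_cases hs : s'' ∈ W
    · have : W ∪ {s''} = W := Finset.union_eq_left.mpr (by simpa using hs)
      rw [if_pos hs, this, zero_add]
    · rw [if_neg hs]
      have hcompl : (W ∪ {s''})ᶜ = Wᶜ.erase s'' := by
        ext x
        simp only [Finset.mem_compl, Finset.mem_union, Finset.mem_erase,
          Finset.mem_singleton]
        tauto
      have hmem : s'' ∈ Wᶜ := Finset.mem_compl.mpr hs
      rw [hcompl, ← Finset.sum_erase_add Wᶜ _ hmem, hdiag s'']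
      ring
  -- the induction
  intro c
  induction c with
  | zero =>
    intro V u hu hcard
    have hempty : (V ∪ {u})ᶜ = ∅ := Finset.card_eq_zero.mp (Nat.le_zero.mp hcard)
    rw [hempty, Finset.sum_empty]
    exact mul_nonneg hγ0 (Finset.sum_nonneg fun k _ => pow_nonneg hγ0 k)
  | succ c ih =>
    intro V u hu hcard
    have hVuD : ((V, u) : Finset S × S) ∈ Finset.univ.filter
        (fun p : Finset S × S => p.2 ∉ p.1 ∧ ((p.1 ∪ {p.2})ᶜ).card ≤ c + 1) := by
      simp only [Finset.mem_filter, Finset.mem_univ, true_and]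
      exact ⟨hu, hcard⟩
    obtain ⟨⟨V₀, u₀⟩, hmemD, hmax⟩ := Finset.exists_max_image
      (Finset.univ.filter
        (fun p : Finset S × S => p.2 ∉ p.1 ∧ ((p.1 ∪ {p.2})ᶜ).card ≤ c + 1))
      (fun p : Finset S × S => ∑ s' ∈ (p.1 ∪ {p.2})ᶜ, Fπ p.2 s') ⟨(V, u), hVuD⟩
    simp only [Finset.mem_filter, Finset.mem_univ, true_and] at hmemD
    obtain ⟨hu₀, hcard₀⟩ := hmemD
    set M : ℝ := ∑ s' ∈ (V₀ ∪ {u₀})ᶜ, Fπ u₀ s' with hM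
    have hmaxD : ∀ (V' : Finset S) (u' : S), u' ∉ V' → ((V' ∪ {u'})ᶜ).card ≤ c + 1 →
        ∑ s' ∈ (V' ∪ {u'})ᶜ, Fπ u' s' ≤ M := by
      intro V' u' h1 h2
      exact hmax (V', u') (by
        simp only [Finset.mem_filter, Finset.mem_univ, true_and]
        exact ⟨h1, h2⟩)
    set A : ℝ := ∑ k ∈ Finset.range (c + 2), γ ^ k with hA
    have hAeq : A = 1 + γ * ∑ k ∈ Finset.range (c + 1), γ ^ k := by
      rw [hA, geom_sum_succ]; ring
    have hAnn : 0 ≤ A := Finset.sum_nonneg fun k _ => pow_nonneg hγ0 k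
    have hu₀' : u₀ ∈ V₀ ∪ {u₀} := Finset.mem_union_right _ (Finset.mem_singleton_self u₀)
    -- each term in the recursion is bounded by max M A
    have hterm : ∀ s'' : S,
        (if s'' ∈ V₀ ∪ {u₀} then (0:ℝ) else 1)
          + ∑ s' ∈ ((V₀ ∪ {u₀}) ∪ {s''})ᶜ, Fπ s'' s' ≤ max M A := by
      intro s''
      by_cases hs : s'' ∈ V₀ ∪ {u₀}
      · rw [if_pos hs, zero_add]
        have hWeq : (V₀ ∪ {u₀}) ∪ {s''} = V₀ ∪ {u₀} :=
          Finset.union_eq_left.mpr (by simpa using hs)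
        have herase : ((V₀ ∪ {u₀}).erase s'') ∪ {s''} = V₀ ∪ {u₀} := by
          ext x
          constructor
          · intro hx
            rcases Finset.mem_union.mp hx with hx | hx
            · exact Finset.mem_of_mem_erase hx
            · rw [Finset.mem_singleton.mp hx]; exact hs
          · intro hx
            rcases eq_or_ne x s'' with rfl | hxs
            · exact Finset.mem_union_right _ (Finset.mem_singleton_self _)
            · exact Finset.mem_union_left _ (Finset.mem_erase.mpr ⟨hxs, hx⟩)
        have h1 := hmaxD ((V₀ ∪ {u₀}).erase s'') s'' (Finset.notMem_erase s'' _)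
          (by rw [herase]; exact hcard₀)
        rw [herase] at h1
        rw [hWeq]
        exact h1.trans (le_max_left M A)
      · rw [if_neg hs]
        have hcard' : (((V₀ ∪ {u₀}) ∪ {s''})ᶜ).card ≤ c := by
          have hcompl : ((V₀ ∪ {u₀}) ∪ {s''})ᶜ = (V₀ ∪ {u₀})ᶜ.erase s'' := by
            ext x
            simp only [Finset.mem_compl, Finset.mem_union, Finset.mem_erase,
              Finset.mem_singleton]
            tauto
          rw [hcompl, Finset.card_erase_of_mem (Finset.mem_compl.mpr hs)]
          omega
        have h2 := ih (V₀ ∪ {u₀}) s'' hs hcard'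
        calc (1:ℝ) + ∑ s' ∈ ((V₀ ∪ {u₀}) ∪ {s''})ᶜ, Fπ s'' s'
            ≤ 1 + γ * ∑ k ∈ Finset.range (c + 1), γ ^ k := by linarith
          _ = A := hAeq.symm
          _ ≤ max M A := le_max_right M A
    have key : M ≤ γ * max M A := by
      calc M = γ * ∑ s'', P u₀ s'' *
            ((if s'' ∈ V₀ ∪ {u₀} then (0:ℝ) else 1)
              + ∑ s' ∈ ((V₀ ∪ {u₀}) ∪ {s''})ᶜ, Fπ s'' s') := hrec (V₀ ∪ {u₀}) u₀ hu₀'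
        _ ≤ γ * ∑ s'', P u₀ s'' * max M A := by
            apply mul_le_mul_of_nonneg_left _ hγ0
            exact Finset.sum_le_sum fun i _ =>
              mul_le_mul_of_nonneg_left (hterm i) (hP0 u₀ i)
        _ = γ * max M A := by rw [← Finset.sum_mul, hP1, one_mul]
    have hMA : M ≤ γ * A := by
      rcases le_total A M with h | h
      · rw [max_eq_left h] at key
        have hM0 : M ≤ 0 := by nlinarith
        have : 0 ≤ γ * A := mul_nonneg hγ0 hAnn
        linarith
      · rw [max_eq_right h] at key
        exact key
    calc ∑ s' ∈ (V ∪ {u})ᶜ, Fπ u s' ≤ M := hmaxD V u hu hcard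
      _ ≤ γ * A := hMA
      _ = γ * ∑ k ∈ Finset.range (c + 1 + 1), γ ^ k := by rw [hA]

/-- Row sums of the FR are bounded:
‖F^π(s)‖₁ ≤ (1 - γ^{|S|+1})/(1 - γ) = ∑_{k=0}^{|S|} γ^k for every state s. -/
theorem fr_row_sum_bound {S : Type*} [Fintype S] [DecidableEq S]
    (γ : ℝ) (hγ0 : 0 ≤ γ) (hγ1 : γ < 1)
    (P : Matrix S S ℝ) (hP0 : ∀ s s', 0 ≤ P s s') (hP1 : ∀ s, ∑ s', P s s' = 1)
    (Fπ : Matrix S S ℝ)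
    (hfix : ∀ s s', Fπ s s' =
      (if s = s' then (1 : ℝ) else 0) +
        γ * (if s = s' then 0 else 1) * ∑ s'', P s s'' * Fπ s'' s') :
    ∀ s, ∑ s', Fπ s s' ≤ ∑ k ∈ Finset.range (Fintype.card S + 1), γ ^ k := by
  intro s
  have hdiag : Fπ s s = 1 := by rw [hfix, if_pos rfl, if_pos rfl]; ring
  have hn : 1 ≤ Fintype.card S := Fintype.card_pos_iff.mpr ⟨s⟩
  have hcompl : ((∅ : Finset S) ∪ {s})ᶜ = Finset.univ.erase s := by
    rw [Finset.empty_union, Finset.compl_singleton]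
  have hcard : (((∅ : Finset S) ∪ {s})ᶜ).card ≤ Fintype.card S - 1 := by
    rw [hcompl, Finset.card_erase_of_mem (Finset.mem_univ s), Finset.card_univ]
  have hb := fr_aux_bound γ hγ0 hγ1 P hP0 hP1 Fπ hfix (Fintype.card S - 1) ∅ s
    (Finset.notMem_empty s) hcard
  rw [hcompl] at hb
  have hrange : Fintype.card S - 1 + 1 = Fintype.card S := by omega
  rw [hrange] at hb
  have hsplit : ∑ s', Fπ s s' = ∑ s' ∈ Finset.univ.erase s, Fπ s s' + Fπ s s :=
    (Finset.sum_erase_add Finset.univ _ (Finset.mem_univ s)).symm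
  have hgeom : ∑ k ∈ Finset.range (Fintype.card S + 1), γ ^ k
      = γ * ∑ k ∈ Finset.range (Fintype.card S), γ ^ k + 1 := geom_sum_succ
  rw [hsplit, hdiag, hgeom]
  linarith
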